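/- Let R be a finite commutative ring. Then every finite set of ideals of R satisfies (R1') if and only if R is isomorphic to a finite direct product of local rings each of whose ideal lattice is totally ordered. -/

import Mathlib

universe u

open Set

def SatisfiesR1' (R : Type*) [CommRing R] : Prop :=
  ∀ (r : ℕ) (I : Fin r → Ideal R) (a : Fin r → R),
    (⋃ j, ((I j : Set R))).ncard ≤ (⋃ j, (a j + ·) '' (I j : Set R)).ncard

lemma mem_addimg {R : Type*} [CommRing R] {a x : R} {s : Set R} :
    x ∈ (a + ·) '' s ↔ x - a ∈ s := by
  constructor
  · rintro ⟨y, hy, rfl⟩; simpa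
  · intro h; exact ⟨x - a, h, by ring⟩

lemma satR1_gen {R : Type*} [CommRing R] (h : SatisfiesR1' R) (ι : Type*) [Finite ι]
    (I : ι → Ideal R) (a : ι → R) :
    (⋃ i, ((I i : Set R))).ncard ≤ (⋃ i, (a i + ·) '' (I i : Set R)).ncard := by
  obtain ⟨n, ⟨e⟩⟩ := Finite.exists_equiv_fin ι
  have h1 : (⋃ i, ((I i : Set R))) = ⋃ j, ((I (e.symm j) : Set R)) :=
    (e.symm.surjective.iUnion_comp _).symm
  have h2 : (⋃ i, (a i + ·) '' (I i : Set R))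
      = ⋃ j, (a (e.symm j) + ·) '' (I (e.symm j) : Set R) :=
    (e.symm.surjective.iUnion_comp _).symm
  rw [h1, h2]
  exact h n (fun j => I (e.symm j)) (fun j => a (e.symm j))

lemma SatisfiesR1'.of_ringEquiv {R S : Type*} [CommRing R] [CommRing S] (e : R ≃+* S)
    (h : SatisfiesR1' R) : SatisfiesR1' S := by
  intro r I a
  set I' : Fin r → Ideal R := fun j => (I j).comap e.toRingHom with hI'
  have hIm : ∀ j, (I j : Set S) = e '' (I' j) := by
    intro j
    rw [hI']
    simp only [Ideal.coe_comap]
    exact (Set.image_preimage_eq _ e.surjective).symm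
  have hCm : ∀ j, ((a j + ·) '' (I j : Set S))
      = e '' ((e.symm (a j) + ·) '' (I' j : Set R)) := by
    intro j
    ext x
    rw [mem_addimg]
    constructor
    · intro hx
      refine ⟨e.symm x, ?_, by simp⟩
      rw [mem_addimg]
      simp only [hI', Ideal.mem_comap]
      simpa using hx
    · rintro ⟨y, hy, rfl⟩
      rw [mem_addimg] at hy
      simp only [hI', Ideal.mem_comap] at hy
      simpa using hy
  calc (⋃ j, ((I j : Set S))).ncard
      = (e '' ⋃ j, ((I' j : Set R))).ncard := by rw [Set.image_iUnion]; exact congrArg _ (by simp [hIm])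
    _ = (⋃ j, ((I' j : Set R))).ncard := Set.ncard_image_of_injective _ e.injective
    _ ≤ (⋃ j, (e.symm (a j) + ·) '' (I' j : Set R)).ncard := h r I' (fun j => e.symm (a j))
    _ = (e '' ⋃ j, (e.symm (a j) + ·) '' (I' j : Set R)).ncard :=
        (Set.ncard_image_of_injective _ e.injective).symm
    _ = (⋃ j, (a j + ·) '' (I j : Set S)).ncard := by
        rw [Set.image_iUnion]; exact congrArg _ (by simp [hCm])

lemma preimage_ncard_eq {R : Type*} [CommRing R] [Finite R] (N : Ideal R)
    (s : Set (R ⧸ N)) :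
    ((Ideal.Quotient.mk N) ⁻¹' s).ncard = s.ncard * (N : Set R).ncard := by
  classical
  set f := Ideal.Quotient.mk N
  have hfs : Function.Surjective f := Ideal.Quotient.mk_surjective
  set g := Function.surjInv hfs with hg
  have hfg : ∀ y, f (g y) = y := fun y => Function.surjInv_eq hfs y
  have e : (f ⁻¹' s) ≃ s × (N : Set R) :=
    { toFun := fun x => (⟨f x.1, x.2⟩, ⟨x.1 - g (f x.1), by
        have h0 : f (x.1 - g (f x.1)) = 0 := by rw [map_sub, hfg, sub_self]
        exact Ideal.Quotient.eq_zero_iff_mem.mp h0⟩)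
      invFun := fun p => ⟨g p.1.1 + p.2.1, by
        have h2 : f p.2.1 = 0 := Ideal.Quotient.eq_zero_iff_mem.2 p.2.2
        simp only [Set.mem_preimage, map_add, hfg, h2, add_zero]
        exact p.1.2⟩
      left_inv := fun x => by
        apply Subtype.ext; simp
      right_inv := fun p => by
        have h2 : f p.2.1 = 0 := Ideal.Quotient.eq_zero_iff_mem.2 p.2.2
        have h3 : f (g p.1.1 + p.2.1) = p.1.1 := by rw [map_add, hfg, h2, add_zero]
        ext
        · exact congrArg Subtype.val (congrArg Prod.fst (by
            apply Prod.ext <;> apply Subtype.ext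
            · exact h3
            · simp [h3]))
        · simp [h3] }
  rw [← Nat.card_coe_set_eq, ← Nat.card_coe_set_eq, ← Nat.card_coe_set_eq,
    Nat.card_congr e, Nat.card_prod]

lemma SatisfiesR1'.quotient {R : Type*} [CommRing R] [Finite R] (h : SatisfiesR1' R)
    (N : Ideal R) : SatisfiesR1' (R ⧸ N) := by
  intro r I a
  set f := Ideal.Quotient.mk N with hf
  have hfs : Function.Surjective f := Ideal.Quotient.mk_surjective
  choose b hb using fun j => hfs (a j)
  set J : Fin r → Ideal R := fun j => (I j).comap f with hJ
  have hN0 : 0 < (N : Set R).ncard := by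
    rw [Set.ncard_pos (Set.toFinite _)]
    exact ⟨0, N.zero_mem⟩
  have key1 : f ⁻¹' (⋃ j, ((I j : Set (R ⧸ N)))) = ⋃ j, ((J j : Set R)) := by
    rw [Set.preimage_iUnion]
    exact Set.iUnion_congr fun j => by rw [hJ]; simp [Ideal.coe_comap]
  have key2 : f ⁻¹' (⋃ j, (a j + ·) '' (I j : Set (R ⧸ N)))
      = ⋃ j, (b j + ·) '' (J j : Set R) := by
    rw [Set.preimage_iUnion]
    refine Set.iUnion_congr fun j => ?_
    ext x
    simp only [Set.mem_preimage, mem_addimg]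
    rw [hJ]
    simp only [Ideal.mem_comap]
    rw [show (Ideal.Quotient.mk N) x - a j = f (x - b j) by rw [map_sub, hb]]
    exact Iff.rfl
  have := h r J b
  have e1 := preimage_ncard_eq N (⋃ j, ((I j : Set (R ⧸ N))))
  have e2 := preimage_ncard_eq N (⋃ j, (a j + ·) '' (I j : Set (R ⧸ N)))
  rw [key1] at e1
  rw [key2] at e2
  rw [e1, e2] at this
  exact Nat.le_of_mul_le_mul_right this hN0

lemma satisfiesR1'_of_subsingleton {R : Type*} [CommRing R] [Subsingleton R] :
    SatisfiesR1' R := by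
  intro r I a
  have : ∀ j, (a j + ·) '' (I j : Set R) = (I j : Set R) := by
    intro j
    rw [Subsingleton.elim (a j) 0]
    simp
  simp only [this, le_refl]

lemma chain_satisfies {R : Type*} [CommRing R] [Finite R]
    (hc : ∀ I J : Ideal R, I ≤ J ∨ J ≤ I) : SatisfiesR1' R := by
  have key : ∀ (n : ℕ) (I : Fin (n + 1) → Ideal R), ∃ j₀, ∀ j, I j ≤ I j₀ := by
    intro n
    induction n with
    | zero => exact fun I => ⟨0, fun j => by rw [Fin.eq_zero j]⟩
    | succ n ih =>
      intro I
      obtain ⟨j₀, hj₀⟩ := ih fun j => I j.succ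
      rcases hc (I 0) (I j₀.succ) with h | h
      · refine ⟨j₀.succ, fun j => ?_⟩
        refine Fin.cases h (fun i => hj₀ i) j
      · exact ⟨0, fun j => Fin.cases le_rfl (fun i => (hj₀ i).trans h) j⟩
  intro r I a
  match r with
  | 0 => simp
  | (n + 1) =>
    obtain ⟨j₀, hj₀⟩ := key n I
    have hU : (⋃ j, ((I j : Set R))) = (I j₀ : Set R) := by
      apply subset_antisymm
      · exact Set.iUnion_subset fun j => hj₀ j
      · exact Set.subset_iUnion (fun j => ((I j : Set R))) j₀
    rw [hU]
    calc (I j₀ : Set R).ncard = ((a j₀ + ·) '' (I j₀ : Set R)).ncard :=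
          (Set.ncard_image_of_injective _ (add_right_injective _)).symm
      _ ≤ (⋃ j, (a j + ·) '' (I j : Set R)).ncard := by
          apply Set.ncard_le_ncard
          · exact Set.subset_iUnion (fun j => (a j + ·) '' (I j : Set R)) j₀
          · exact Set.toFinite _

lemma ncard_eq_sum_fibers_snd {A B : Type*} [Finite A] [Fintype B] (S : Set (A × B)) :
    S.ncard = ∑ y : B, {x | (x, y) ∈ S}.ncard := by
  classical
  haveI : ∀ y : B, Fintype {x | (x, y) ∈ S} := fun y => Fintype.ofFinite _
  have e : S ≃ Σ y : B, {x | (x, y) ∈ S} :=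
    { toFun := fun p => ⟨p.1.2, ⟨p.1.1, by simpa [Prod.mk.eta] using p.2⟩⟩
      invFun := fun q => ⟨(q.2.1, q.1), q.2.2⟩
      left_inv := fun p => by apply Subtype.ext; simp
      right_inv := fun q => by rfl }
  rw [← Nat.card_coe_set_eq, Nat.card_congr e, Nat.card_eq_fintype_card,
    Fintype.card_sigma]
  exact Finset.sum_congr rfl fun y _ => by
    rw [← Nat.card_eq_fintype_card, Nat.card_coe_set_eq]

lemma ncard_eq_sum_fibers_fst {A B : Type*} [Fintype A] [Finite B] (S : Set (A × B)) :
    S.ncard = ∑ x : A, {y | (x, y) ∈ S}.ncard := by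
  classical
  haveI : ∀ x : A, Fintype {y | (x, y) ∈ S} := fun x => Fintype.ofFinite _
  have e : S ≃ Σ x : A, {y | (x, y) ∈ S} :=
    { toFun := fun p => ⟨p.1.1, ⟨p.1.2, by simpa [Prod.mk.eta] using p.2⟩⟩
      invFun := fun q => ⟨(q.1, q.2.1), q.2.2⟩
      left_inv := fun p => by apply Subtype.ext; simp
      right_inv := fun q => by rfl }
  rw [← Nat.card_coe_set_eq, Nat.card_congr e, Nat.card_eq_fintype_card,
    Fintype.card_sigma]
  exact Finset.sum_congr rfl fun x _ => by
    rw [← Nat.card_eq_fintype_card, Nat.card_coe_set_eq]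

lemma fiber_snd_of_iUnion_prod {A B : Type*} {r : ℕ} (P : Fin r → Set A) (Q : Fin r → Set B)
    (y : B) : {x | (x, y) ∈ ⋃ j, P j ×ˢ Q j} = ⋃ j : {j // y ∈ Q j}, P j.1 := by
  ext x
  simp only [Set.mem_setOf_eq, Set.mem_iUnion, Set.mem_prod]
  constructor
  · rintro ⟨j, hx, hy⟩; exact ⟨⟨j, hy⟩, hx⟩
  · rintro ⟨⟨j, hy⟩, hx⟩; exact ⟨j, hx, hy⟩

lemma fiber_fst_of_iUnion_prod {A B : Type*} {r : ℕ} (P : Fin r → Set A) (Q : Fin r → Set B)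
    (x : A) : {y | (x, y) ∈ ⋃ j, P j ×ˢ Q j} = ⋃ j : {j // x ∈ P j}, Q j.1 := by
  ext y
  simp only [Set.mem_setOf_eq, Set.mem_iUnion, Set.mem_prod]
  constructor
  · rintro ⟨j, hx, hy⟩; exact ⟨⟨j, hx⟩, hy⟩
  · rintro ⟨⟨j, hx⟩, hy⟩; exact ⟨j, hx, hy⟩

set_option maxHeartbeats 2000000 in
lemma SatisfiesR1'.prod {A B : Type*} [CommRing A] [CommRing B] [Finite A] [Finite B]
    (hA : SatisfiesR1' A) (hB : SatisfiesR1' B) : SatisfiesR1' (A × B) := by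
  classical
  intro r I a
  haveI := Fintype.ofFinite A
  haveI := Fintype.ofFinite B
  set K : Fin r → Ideal A := fun j => (I j).map (RingHom.fst A B) with hK
  set L : Fin r → Ideal B := fun j => (I j).map (RingHom.snd A B) with hL
  have hI : ∀ j, (I j : Set (A × B)) = (K j : Set A) ×ˢ (L j : Set B) := by
    intro j
    conv_lhs => rw [Ideal.ideal_prod_eq (I j)]
    ext ⟨x, y⟩
    simp [Ideal.mem_prod, Set.mem_prod, hK, hL]
  have hC : ∀ j, ((a j + ·) '' (I j : Set (A × B)))
      = (((a j).1 + ·) '' (K j : Set A)) ×ˢ (((a j).2 + ·) '' (L j : Set B)) := by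
    intro j
    rw [hI j]
    ext p
    rw [mem_addimg, Set.mem_prod, Set.mem_prod, mem_addimg, mem_addimg, Prod.fst_sub,
      Prod.snd_sub]
  -- middle set
  set M : Set (A × B) := ⋃ j, (K j : Set A) ×ˢ (((a j).2 + ·) '' (L j : Set B)) with hM
  have step1 : M.ncard ≤ (⋃ j, (a j + ·) '' (I j : Set (A × B))).ncard := by
    have hrw : (⋃ j, (a j + ·) '' (I j : Set (A × B)))
        = ⋃ j, (((a j).1 + ·) '' (K j : Set A)) ×ˢ (((a j).2 + ·) '' (L j : Set B)) :=
      Set.iUnion_congr hC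
    rw [hrw, hM, ncard_eq_sum_fibers_snd, ncard_eq_sum_fibers_snd]
    apply Finset.sum_le_sum
    intro y _
    rw [fiber_snd_of_iUnion_prod, fiber_snd_of_iUnion_prod]
    exact satR1_gen hA {j // y ∈ ((a j).2 + ·) '' (L j : Set B)} (fun j => K j.1) (fun j => (a j.1).1)
  have step2 : (⋃ j, ((I j : Set (A × B)))).ncard ≤ M.ncard := by
    have hrw : (⋃ j, ((I j : Set (A × B)))) = ⋃ j, (K j : Set A) ×ˢ (L j : Set B) :=
      Set.iUnion_congr hI
    rw [hrw, hM, ncard_eq_sum_fibers_fst, ncard_eq_sum_fibers_fst]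
    apply Finset.sum_le_sum
    intro x _
    rw [fiber_fst_of_iUnion_prod, fiber_fst_of_iUnion_prod]
    exact satR1_gen hB {j // x ∈ (K j : Set A)} (fun j => L j.1) (fun j => (a j.1).2)
  exact step2.trans step1

def ringEquivPiSucc {n : ℕ} (Rs : Fin (n + 1) → Type u) [∀ i, CommRing (Rs i)] :
    (∀ i, Rs i) ≃+* Rs 0 × ∀ i : Fin n, Rs i.succ where
  toFun f := (f 0, fun i => f i.succ)
  invFun p := Fin.cases p.1 p.2
  left_inv f := by
    funext i
    refine Fin.cases ?_ (fun j => ?_) i <;> simp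
  right_inv p := by
    ext <;> simp
  map_mul' _ _ := by
    ext <;> simp
  map_add' _ _ := by
    ext <;> simp

lemma ann_eq_max {S : Type*} [CommRing S] [IsLocalRing S] {z : S} (hz : z ≠ 0)
    {c : S} (hc : c * z = 0) : c ∈ IsLocalRing.maximalIdeal S := by
  by_contra hcm
  have hu : IsUnit c := by
    rw [IsLocalRing.mem_maximalIdeal, mem_nonunits_iff, not_not] at hcm
    exact hcm
  obtain ⟨u, rfl⟩ := hu
  apply hz
  calc z = ↑u⁻¹ * (↑u * z) := by rw [← mul_assoc, Units.inv_mul, one_mul]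
    _ = 0 := by rw [hc, mul_zero]

lemma card_span_eq {S : Type*} [CommRing S] [Finite S] [IsLocalRing S] {z : S} (hz : z ≠ 0)
    (hzm : ∀ t ∈ IsLocalRing.maximalIdeal S, t * z = 0) :
    (Ideal.span {z} : Set S).ncard = Nat.card (S ⧸ IsLocalRing.maximalIdeal S) := by
  set f := LinearMap.toSpanSingleton S S z with hf
  have hker : LinearMap.ker f = IsLocalRing.maximalIdeal S := by
    ext c
    simp only [LinearMap.mem_ker, hf, LinearMap.toSpanSingleton_apply, smul_eq_mul]
    exact ⟨fun hc => ann_eq_max hz hc, fun hc => hzm c hc⟩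
  have hrange : LinearMap.range f = Ideal.span {z} := by
    ext w
    rw [Ideal.mem_span_singleton', LinearMap.mem_range]
    simp only [hf, LinearMap.toSpanSingleton_apply, smul_eq_mul]
  rw [← Nat.card_coe_set_eq, ← hker, ← hrange]
  exact (Nat.card_congr (LinearMap.quotKerEquivRange f).toEquiv).symm

lemma iUnion_fin3 {α : Type*} (f : Fin 3 → Set α) : (⋃ j, f j) = f 0 ∪ f 1 ∪ f 2 := by
  ext t
  simp only [Set.mem_iUnion, Set.mem_union]
  constructor
  · rintro ⟨j, hj⟩
    fin_cases j
    · exact Or.inl (Or.inl hj)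
    · exact Or.inl (Or.inr hj)
    · exact Or.inr hj
  · rintro ((h | h) | h)
    exacts [⟨0, h⟩, ⟨1, h⟩, ⟨2, h⟩]

lemma socle_elt {S : Type*} [CommRing S] [Finite S] [IsLocalRing S] {z : S} (hz : z ≠ 0) :
    ∃ w : S, w ∈ Ideal.span {z} ∧ w ≠ 0 ∧
      ∀ t ∈ IsLocalRing.maximalIdeal S, t * w = 0 := by
  haveI : IsArtinianRing S := isArtinian_of_finite
  set m := IsLocalRing.maximalIdeal S with hm
  obtain ⟨c, hc⟩ := IsArtinianRing.isNilpotent_jacobson_bot (R := S)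
  have hjac : Ideal.jacobson (⊥ : Ideal S) = m := IsLocalRing.jacobson_eq_maximalIdeal ⊥ bot_ne_top
  rw [hjac] at hc
  have hex : ∃ k, m ^ k * Ideal.span {z} = ⊥ := ⟨c, by rw [hc]; exact Ideal.bot_mul _⟩
  classical
  set k₀ := Nat.find hex with hk₀
  have hspec : m ^ k₀ * Ideal.span {z} = ⊥ := Nat.find_spec hex
  have hk₀ne : k₀ ≠ 0 := by
    intro h0
    rw [h0, pow_zero, one_mul, Ideal.span_singleton_eq_bot] at hspec
    exact hz hspec
  have hlt : m ^ (k₀ - 1) * Ideal.span {z} ≠ ⊥ := Nat.find_min hex (by omega)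
  obtain ⟨w, hw, hwne⟩ := Submodule.exists_mem_ne_zero_of_ne_bot hlt
  refine ⟨w, Ideal.mul_le_right hw, hwne, fun t ht => ?_⟩
  have : t * w ∈ m * (m ^ (k₀ - 1) * Ideal.span {z}) := Ideal.mul_mem_mul ht hw
  rw [← mul_assoc, ← pow_succ', show k₀ - 1 + 1 = k₀ by omega] at this
  rw [hspec] at this
  exact Ideal.mem_bot.mp this

lemma not_R1'_two_socle {S : Type*} [CommRing S] [Finite S] [IsLocalRing S]
    (h : SatisfiesR1' S) {x y : S} (hx : x ≠ 0) (hy : y ≠ 0)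
    (hmx : ∀ t ∈ IsLocalRing.maximalIdeal S, t * x = 0)
    (hmy : ∀ t ∈ IsLocalRing.maximalIdeal S, t * y = 0)
    (hinf : Ideal.span {x} ⊓ Ideal.span {y} = ⊥) : False := by
  classical
  set q := Nat.card (S ⧸ IsLocalRing.maximalIdeal S) with hqdef
  set A : Set S := ((Ideal.span {x} : Ideal S) : Set S) with hA
  set B : Set S := ((Ideal.span {y} : Ideal S) : Set S) with hB
  set C : Set S := ((Ideal.span {x + y} : Ideal S) : Set S) with hC
  have hxy : x + y ≠ 0 := by
    intro h0
    apply hx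
    have hxmem : x ∈ Ideal.span {x} ⊓ Ideal.span {y} := by
      constructor
      · exact Ideal.mem_span_singleton_self x
      · have : x = (-1 : S) * y := by
          have : x = -y := by linear_combination h0
          rw [this]; ring
        exact Ideal.mem_span_singleton'.mpr ⟨-1, this.symm⟩
    rw [hinf] at hxmem
    exact Ideal.mem_bot.mp hxmem
  have hmxy : ∀ t ∈ IsLocalRing.maximalIdeal S, t * (x + y) = 0 := by
    intro t ht
    rw [mul_add, hmx t ht, hmy t ht, add_zero]
  have hqA : A.ncard = q := card_span_eq hx hmx
  have hqB : B.ncard = q := card_span_eq hy hmy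
  have hqC : C.ncard = q := card_span_eq hxy hmxy
  -- intersections of the ideals
  have hAB : A ∩ B = {0} := by
    apply subset_antisymm
    · rintro z ⟨hz1, hz2⟩
      have : z ∈ Ideal.span {x} ⊓ Ideal.span {y} := ⟨hz1, hz2⟩
      rw [hinf] at this
      exact Ideal.mem_bot.mp this
    · rintro z rfl
      exact ⟨Ideal.zero_mem _, Ideal.zero_mem _⟩
  have hkeyA : ∀ z : S, z ∈ A → z ∈ C → z = 0 := by
    intro z hzA hzC
    obtain ⟨d, hd⟩ := Ideal.mem_span_singleton'.mp hzA
    obtain ⟨c, hc⟩ := Ideal.mem_span_singleton'.mp hzC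
    have hcy : c * y = (d - c) * x := by linear_combination hc - hd
    have hcy0 : c * y = 0 := by
      have hmem : c * y ∈ Ideal.span {x} ⊓ Ideal.span {y} := by
        constructor
        · exact Ideal.mem_span_singleton'.mpr ⟨d - c, hcy.symm⟩
        · exact Ideal.mem_span_singleton'.mpr ⟨c, rfl⟩
      rw [hinf] at hmem
      exact Ideal.mem_bot.mp hmem
    have hcm : c ∈ IsLocalRing.maximalIdeal S := ann_eq_max hy hcy0
    rw [← hc, mul_add, hmx c hcm, hmy c hcm, add_zero]
  have hkeyB : ∀ z : S, z ∈ B → z ∈ C → z = 0 := by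
    intro z hzB hzC
    obtain ⟨d, hd⟩ := Ideal.mem_span_singleton'.mp hzB
    obtain ⟨c, hc⟩ := Ideal.mem_span_singleton'.mp hzC
    have hcx : c * x = (d - c) * y := by linear_combination hc - hd
    have hcx0 : c * x = 0 := by
      have hmem : c * x ∈ Ideal.span {x} ⊓ Ideal.span {y} := by
        constructor
        · exact Ideal.mem_span_singleton'.mpr ⟨c, rfl⟩
        · exact Ideal.mem_span_singleton'.mpr ⟨d - c, hcx.symm⟩
      rw [hinf] at hmem
      exact Ideal.mem_bot.mp hmem
    have hcm : c ∈ IsLocalRing.maximalIdeal S := ann_eq_max hx hcx0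
    rw [← hc, mul_add, hmx c hcm, hmy c hcm, add_zero]
  have hABC : (A ∪ B) ∩ C = {0} := by
    apply subset_antisymm
    · rintro z ⟨hz1 | hz1, hz2⟩
      · exact hkeyA z hz1 hz2
      · exact hkeyB z hz1 hz2
    · rintro z rfl
      exact ⟨Or.inl (Ideal.zero_mem _), Ideal.zero_mem _⟩
  -- the three ideals and translates
  set I3 : Fin 3 → Ideal S := ![Ideal.span {x}, Ideal.span {y}, Ideal.span {x + y}] with hI3
  set a3 : Fin 3 → S := ![0, x, 0] with ha3
  have hU : (⋃ j, ((I3 j : Set S))) = A ∪ B ∪ C := by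
    rw [iUnion_fin3]
    rw [hI3]
    rfl
  set C2 : Set S := (x + ·) '' B with hC2
  have hV : (⋃ j, (a3 j + ·) '' (I3 j : Set S)) = A ∪ C2 ∪ C := by
    rw [iUnion_fin3 (fun j => (a3 j + ·) '' (I3 j : Set S))]
    have h0 : ∀ s : Set S, ((0 : S) + ·) '' s = s := by
      intro s; simp
    have e0 : (a3 0 + ·) '' (I3 0 : Set S) = A := by
      rw [show a3 0 = 0 from rfl, h0]; rfl
    have e1 : (a3 1 + ·) '' (I3 1 : Set S) = C2 := by
      rw [show a3 1 = x from rfl]; rfl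
    have e2 : (a3 2 + ·) '' (I3 2 : Set S) = C := by
      rw [show a3 2 = 0 from rfl, h0]; rfl
    rw [e0, e1, e2]
  have hqC2 : C2.ncard = q := by
    rw [hC2, Set.ncard_image_of_injective _ (add_right_injective x), hqB]
  -- counting the ideal union
  have n1 : (A ∪ B).ncard + 1 = q + q := by
    have := Set.ncard_union_add_ncard_inter A B (Set.toFinite _) (Set.toFinite _)
    rw [hAB, Set.ncard_singleton, hqA, hqB] at this
    exact this
  have n2 : (A ∪ B ∪ C).ncard + 1 = (A ∪ B).ncard + q := by
    have := Set.ncard_union_add_ncard_inter (A ∪ B) C (Set.toFinite _) (Set.toFinite _)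
    rw [hABC, Set.ncard_singleton, hqC] at this
    exact this
  -- counting the coset union
  have m1 : (A ∪ C2).ncard + (A ∩ C2).ncard = q + q := by
    have := Set.ncard_union_add_ncard_inter A C2 (Set.toFinite _) (Set.toFinite _)
    rw [hqA, hqC2] at this
    exact this
  have hxAC2 : x ∈ A ∩ C2 := by
    constructor
    · exact Ideal.mem_span_singleton_self x
    · rw [hC2, mem_addimg, sub_self]
      exact Ideal.zero_mem _
  have m1' : 1 ≤ (A ∩ C2).ncard := (Set.ncard_pos (Set.toFinite _)).mpr ⟨x, hxAC2⟩
  have m2 : (A ∪ C2 ∪ C).ncard + ((A ∪ C2) ∩ C).ncard = (A ∪ C2).ncard + q := by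
    have := Set.ncard_union_add_ncard_inter (A ∪ C2) C (Set.toFinite _) (Set.toFinite _)
    rw [hqC] at this
    exact this
  have hpair : ({0, x + y} : Set S) ⊆ (A ∪ C2) ∩ C := by
    rintro z (rfl | rfl)
    · exact ⟨Or.inl (Ideal.zero_mem _), Ideal.zero_mem _⟩
    · refine ⟨Or.inr ?_, Ideal.mem_span_singleton_self _⟩
      rw [hC2, mem_addimg]
      have : x + y - x = y := by ring
      rw [this]
      exact Ideal.mem_span_singleton_self y
  have m2' : 2 ≤ ((A ∪ C2) ∩ C).ncard := by
    have hp : ({0, x + y} : Set S).ncard = 2 := Set.ncard_pair (Ne.symm hxy)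
    rw [← hp]
    exact Set.ncard_le_ncard hpair (Set.toFinite _)
  -- conclude
  have hmain := h 3 I3 a3
  rw [hU, hV] at hmain
  omega

lemma chain_of_local {S : Type*} [CommRing S] [Finite S] [IsLocalRing S]
    (h : SatisfiesR1' S) : ∀ I J : Ideal S, I ≤ J ∨ J ≤ I := by
  intro I J
  by_contra hcon
  push_neg at hcon
  obtain ⟨hIJ, hJI⟩ := hcon
  obtain ⟨x, hxI, hxJ⟩ := SetLike.not_le_iff_exists.mp hIJ
  obtain ⟨y, hyJ, hyI⟩ := SetLike.not_le_iff_exists.mp hJI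
  set N : Ideal S := Ideal.span {x} ⊓ Ideal.span {y} with hN
  have hsyJ : Ideal.span {y} ≤ J := (Ideal.span_singleton_le_iff_mem _).mpr hyJ
  have hsxI : Ideal.span {x} ≤ I := (Ideal.span_singleton_le_iff_mem _).mpr hxI
  have hxN : x ∉ N := fun hxmem => hxJ (hsyJ (Submodule.mem_inf.mp hxmem).2)
  have hyN : y ∉ N := fun hymem => hyI (hsxI (Submodule.mem_inf.mp hymem).1)
  have hNtop : N ≠ ⊤ := fun htop => hxN (htop ▸ Submodule.mem_top)
  haveI : Nontrivial (S ⧸ N) := Ideal.Quotient.nontrivial_iff.mpr hNtop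
  haveI : Finite (S ⧸ N) := Finite.of_surjective _ Ideal.Quotient.mk_surjective
  haveI : IsLocalRing (S ⧸ N) :=
    IsLocalRing.of_surjective' (Ideal.Quotient.mk N) Ideal.Quotient.mk_surjective
  have hq : SatisfiesR1' (S ⧸ N) := h.quotient N
  set xb := Ideal.Quotient.mk N x with hxb
  set yb := Ideal.Quotient.mk N y with hyb
  have hxb0 : xb ≠ 0 := fun h0 => hxN (Ideal.Quotient.eq_zero_iff_mem.mp h0)
  have hyb0 : yb ≠ 0 := fun h0 => hyN (Ideal.Quotient.eq_zero_iff_mem.mp h0)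
  have hinfb : Ideal.span {xb} ⊓ Ideal.span {yb} = ⊥ := by
    rw [eq_bot_iff]
    rintro z ⟨hz1, hz2⟩
    obtain ⟨a, ha⟩ := Ideal.mem_span_singleton'.mp hz1
    obtain ⟨b, hb⟩ := Ideal.mem_span_singleton'.mp hz2
    obtain ⟨a', rfl⟩ := Ideal.Quotient.mk_surjective a
    obtain ⟨b', rfl⟩ := Ideal.Quotient.mk_surjective b
    have h2 : Ideal.Quotient.mk N (a' * x - b' * y) = 0 := by
      rw [map_sub, map_mul, map_mul, ← hxb, ← hyb, ha, hb, sub_self]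
    have h3 : a' * x - b' * y ∈ N := Ideal.Quotient.eq_zero_iff_mem.mp h2
    have h4 : a' * x ∈ Ideal.span {y} := by
      have h5 : a' * x - b' * y ∈ Ideal.span {y} := (Submodule.mem_inf.mp h3).2
      have h6 : b' * y ∈ Ideal.span {y} := Ideal.mem_span_singleton'.mpr ⟨b', rfl⟩
      have := Ideal.add_mem _ h5 h6
      simpa using this
    have h7 : a' * x ∈ N := ⟨Ideal.mem_span_singleton'.mpr ⟨a', rfl⟩, h4⟩
    have h8 : z = 0 := by
      rw [← ha, ← map_mul, Ideal.Quotient.eq_zero_iff_mem]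
      exact h7
    rw [h8]
    exact Ideal.zero_mem _
  obtain ⟨x₀, hx₀span, hx₀ne, hx₀m⟩ := socle_elt hxb0
  obtain ⟨y₀, hy₀span, hy₀ne, hy₀m⟩ := socle_elt hyb0
  have hinf0 : Ideal.span {x₀} ⊓ Ideal.span {y₀} = ⊥ := by
    rw [eq_bot_iff, ← hinfb]
    exact inf_le_inf ((Ideal.span_singleton_le_iff_mem _).mpr hx₀span)
      ((Ideal.span_singleton_le_iff_mem _).mpr hy₀span)
  exact not_R1'_two_socle hq hx₀ne hy₀ne hx₀m hy₀m hinf0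

lemma pi_satisfies : ∀ (k : ℕ) (Rs : Fin k → Type u) [∀ i, CommRing (Rs i)]
    [∀ i, Finite (Rs i)],
    (∀ i, ∀ I J : Ideal (Rs i), I ≤ J ∨ J ≤ I) → SatisfiesR1' (∀ i, Rs i) := by
  intro k
  induction k with
  | zero =>
    intro Rs _ _ _
    exact satisfiesR1'_of_subsingleton
  | succ n ih =>
    intro Rs instC instF hc
    have h1 : SatisfiesR1' (Rs 0) := chain_satisfies (hc 0)
    have h2 : SatisfiesR1' (∀ i : Fin n, Rs i.succ) := ih (fun i => Rs i.succ) (fun i => hc i.succ)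
    exact (h1.prod h2).of_ringEquiv (ringEquivPiSucc Rs).symm

lemma finset_inf_eq_prod_of_coprime {R : Type*} [CommRing R] {ι : Type*}
    (s : Finset ι) (f : ι → Ideal R)
    (h : ∀ i ∈ s, ∀ j ∈ s, i ≠ j → IsCoprime (f i) (f j)) :
    s.inf f = ∏ i ∈ s, f i := by
  classical
  induction s using Finset.cons_induction with
  | empty => simp [Ideal.one_eq_top]
  | cons a s ha ih =>
    rw [Finset.inf_cons, Finset.prod_cons,
      ih (fun i hi j hj hij => h i (Finset.mem_cons_of_mem hi) j (Finset.mem_cons_of_mem hj) hij)]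
    refine Ideal.inf_eq_mul_of_isCoprime ?_
    refine IsCoprime.prod_right fun i hi => ?_
    exact h a (Finset.mem_cons_self a s) i (Finset.mem_cons_of_mem hi)
      (fun hne => ha (hne ▸ hi))

lemma isLocalRing_quot_pow_maximal {R : Type*} [CommRing R] {m : Ideal R}
    (hm : m.IsMaximal) {n : ℕ} (hn : n ≠ 0) : IsLocalRing (R ⧸ m ^ n) := by
  have hpow : m ^ n ≠ ⊤ := by
    intro htop
    exact hm.ne_top (top_le_iff.mp (htop ▸ Ideal.pow_le_self hn))
  haveI : Nontrivial (R ⧸ m ^ n) := Ideal.Quotient.nontrivial_iff.mpr hpow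
  apply IsLocalRing.of_unique_max_ideal
  obtain ⟨Mq, hMq⟩ := Ideal.exists_maximal (R ⧸ m ^ n)
  have key : ∀ K : Ideal (R ⧸ m ^ n), K.IsMaximal →
      K = Ideal.map (Ideal.Quotient.mk (m ^ n)) m := by
    intro K hK
    have hsurj : Function.Surjective (Ideal.Quotient.mk (m ^ n)) :=
      Ideal.Quotient.mk_surjective
    have hcomax : (K.comap (Ideal.Quotient.mk (m ^ n))).IsMaximal :=
      Ideal.comap_isMaximal_of_surjective _ hsurj
    have hker : m ^ n ≤ K.comap (Ideal.Quotient.mk (m ^ n)) := by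
      intro t ht
      have : Ideal.Quotient.mk (m ^ n) t = 0 := Ideal.Quotient.eq_zero_iff_mem.mpr ht
      simp [Ideal.mem_comap, this]
    have hle : m ≤ K.comap (Ideal.Quotient.mk (m ^ n)) :=
      Ideal.IsPrime.le_of_pow_le (hP := hcomax.isPrime) hker
    have heq : K.comap (Ideal.Quotient.mk (m ^ n)) = m :=
      (hm.eq_of_le hcomax.ne_top hle).symm
    calc K = Ideal.map (Ideal.Quotient.mk (m ^ n)) (K.comap (Ideal.Quotient.mk (m ^ n))) :=
          (Ideal.map_comap_of_surjective _ hsurj K).symm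
      _ = Ideal.map (Ideal.Quotient.mk (m ^ n)) m := by rw [heq]
  refine ⟨Mq, hMq, fun J hJ => ?_⟩
  rw [key J hJ, key Mq hMq]

/-- **Theorem 2 of the paper.** A finite commutative ring `R` satisfies
(R1') for every finite set of ideals iff `R` is isomorphic to a finite direct product of
local rings each of whose ideal lattice is totally ordered. -/
theorem rogers_finite_rings (R : Type u) [CommRing R] [Finite R] :
    SatisfiesR1' R ↔
      ∃ (k : ℕ) (Rs : Fin k → Type u) (_ : ∀ i, CommRing (Rs i)),
        Nonempty (R ≃+* ∀ i, Rs i) ∧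
          ∀ i, IsLocalRing (Rs i) ∧ ∀ I J : Ideal (Rs i), I ≤ J ∨ J ≤ I := by
  constructor
  · -- forward direction
    intro h
    classical
    haveI : IsArtinianRing R := isArtinian_of_finite
    haveI : Finite ↥{I : Ideal R | I.IsMaximal} :=
      (IsArtinianRing.setOfPred_isMaximal_finite R).to_subtype
    haveI := Fintype.ofFinite ↥{I : Ideal R | I.IsMaximal}
    obtain ⟨c, hc⟩ := IsArtinianRing.isNilpotent_jacobson_bot (R := R)
    set n := c + 1 with hn
    set f : ↥{I : Ideal R | I.IsMaximal} → Ideal R := fun I => I.1 ^ n with hf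
    have hcop : Pairwise (Function.onFun IsCoprime f) := by
      intro I J hIJ
      have h1 : IsCoprime I.1 J.1 :=
        Ideal.isCoprime_iff_sup_eq.mpr (I.2.coprime_of_ne J.2 (Subtype.coe_ne_coe.mpr hIJ))
      exact h1.pow
    have hinf : (⨅ I, f I) = ⊥ := by
      rcases subsingleton_or_nontrivial R with hsub | hnontriv
      · exact Subsingleton.elim _ _
      · apply le_antisymm _ bot_le
        have hip : (⨅ I, f I) = Finset.univ.inf f := by
          rw [Finset.inf_univ_eq_iInf]
        rw [hip, finset_inf_eq_prod_of_coprime _ f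
          (fun i _ j _ hij => hcop hij)]
        have hprodle : (∏ I : ↥{I : Ideal R | I.IsMaximal}, I.1) ≤ Ideal.jacobson ⊥ := by
          rw [Ideal.jacobson]
          apply le_sInf
          rintro J ⟨-, hJ⟩
          exact le_trans Ideal.prod_le_inf (Finset.inf_le (Finset.mem_univ (⟨J, hJ⟩ : ↥{I : Ideal R | I.IsMaximal})))
        calc (∏ I, f I) = (∏ I : ↥{I : Ideal R | I.IsMaximal}, I.1) ^ n := by
              rw [hf, Finset.prod_pow]
          _ ≤ (Ideal.jacobson ⊥) ^ n := Ideal.pow_right_mono hprodle n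
          _ = (Ideal.jacobson ⊥) ^ c * Ideal.jacobson ⊥ := pow_succ _ _
          _ = ⊥ := by rw [hc]; exact Ideal.bot_mul _
    set k := Fintype.card ↥{I : Ideal R | I.IsMaximal} with hk
    set eidx : Fin k ≃ ↥{I : Ideal R | I.IsMaximal} := (Fintype.equivFin _).symm with heidx
    refine ⟨k, fun j => R ⧸ f (eidx j), fun j => inferInstance, ⟨?_⟩, ?_⟩
    · refine ((RingEquiv.quotientBot R).symm.trans
        ((Ideal.quotEquivOfEq hinf.symm).trans
          ((Ideal.quotientInfRingEquivPiQuotient f hcop).trans ?_)))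
      exact (RingEquiv.piCongrLeft (fun I => R ⧸ f I) eidx).symm
    · intro j
      haveI : Finite (R ⧸ f (eidx j)) :=
        Finite.of_surjective _ Ideal.Quotient.mk_surjective
      haveI : IsLocalRing (R ⧸ f (eidx j)) :=
        isLocalRing_quot_pow_maximal (eidx j).2 (by omega : n ≠ 0)
      exact ⟨inferInstance, chain_of_local (h.quotient _)⟩
  · -- backward direction
    rintro ⟨k, Rs, instC, ⟨e⟩, hloc⟩
    haveI : ∀ i, Finite (Rs i) := by
      intro i
      haveI : Finite (∀ i, Rs i) := Finite.of_surjective e e.surjective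
      exact Finite.of_surjective (fun g : (∀ i, Rs i) => g i) (Function.surjective_eval i)
    have hpi : SatisfiesR1' (∀ i, Rs i) := pi_satisfies k Rs (fun i => (hloc i).2)
    exact hpi.of_ringEquiv e.symm
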